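/- For every natural number k ≥ 0, ∫₀^∞ x² · (1/cosh x)^{2k+2} dx = (2^{2k−1}·(k!)²/(2k+1)!) · (π²/6 − Σ_{j=1}^{k} 1/j²), with the convention that the empty sum (k = 0) equals 0; in particular ∫₀^∞ x²·(1/cosh x)² dx = π²/12. -/

import Mathlib

open MeasureTheory Finset Set Filter Real Topology

noncomputable def sch (x : ℝ) : ℝ := (Real.cosh x)⁻¹

lemma sch_pos (x : ℝ) : 0 < sch x := inv_pos.2 (Real.cosh_pos x)

lemma sch_le (x : ℝ) : sch x ≤ 2 * Real.exp (-x) := by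
  have h : Real.exp x / 2 ≤ Real.cosh x := by
    rw [Real.cosh_eq]; have := Real.exp_pos (-x); linarith
  have h2 : (Real.cosh x)⁻¹ ≤ (Real.exp x / 2)⁻¹ := by
    gcongr
  calc sch x ≤ (Real.exp x / 2)⁻¹ := h2
    _ = 2 * Real.exp (-x) := by rw [Real.exp_neg]; field_simp

lemma pow_sch_le {m : ℕ} (hm : 1 ≤ m) {x : ℝ} (hx : 0 ≤ x) :
    sch x ^ m ≤ 2 ^ m * Real.exp (-x) := by
  calc sch x ^ m ≤ (2 * Real.exp (-x)) ^ m :=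
        pow_le_pow_left₀ (sch_pos x).le (sch_le x) m
    _ = 2 ^ m * Real.exp (-x) ^ m := by rw [mul_pow]
    _ ≤ 2 ^ m * Real.exp (-x) := by
        gcongr
        calc Real.exp (-x) ^ m = Real.exp (m * (-x)) := by
              rw [← Real.exp_nat_mul]
          _ ≤ Real.exp (-x) := by
              apply Real.exp_le_exp.2
              nlinarith [hx, (by exact_mod_cast hm : (1:ℝ) ≤ (m:ℝ))]

lemma continuous_sch : Continuous sch :=
  Real.continuous_cosh.inv₀ fun x => (Real.cosh_pos x).ne'

lemma tendsto_pow_mul_sch (p : ℕ) {m : ℕ} (hm : 1 ≤ m) :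
    Tendsto (fun x : ℝ => x ^ p * sch x ^ m) atTop (𝓝 0) := by
  apply squeeze_zero' (g := fun x => 2 ^ m * (x ^ p * Real.exp (-x)))
  · filter_upwards [eventually_ge_atTop (0:ℝ)] with x hx
    exact mul_nonneg (by positivity) (pow_nonneg (sch_pos x).le m)
  · filter_upwards [eventually_ge_atTop (0:ℝ)] with x hx
    have := pow_sch_le hm hx
    have hxp : 0 ≤ x ^ p := by positivity
    nlinarith [this, hxp]
  · simpa using (tendsto_pow_mul_exp_neg_atTop_nhds_zero p).const_mul ((2:ℝ) ^ m)

lemma integrableOn_pow_mul_sch (p : ℕ) {m : ℕ} (hm : 1 ≤ m) :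
    IntegrableOn (fun x : ℝ => x ^ p * sch x ^ m) (Ioi 0) := by
  apply integrable_of_isBigO_exp_neg (b := 1/2) (by norm_num)
  · exact ((continuous_pow p).mul (continuous_sch.pow m)).continuousOn
  · have h0 : Tendsto (fun x : ℝ => x ^ p * Real.exp (-(1/2) * x)) atTop (𝓝 0) := by
      have := tendsto_rpow_mul_exp_neg_mul_atTop_nhds_zero (p : ℝ) (1/2) (by norm_num)
      apply this.congr'
      filter_upwards [eventually_ge_atTop (0:ℝ)] with x hx
      rw [Real.rpow_natCast]
    apply Asymptotics.IsBigO.of_bound ((2:ℝ) ^ m)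
    filter_upwards [eventually_ge_atTop (0:ℝ),
      h0.eventually (eventually_le_nhds (by norm_num : (0:ℝ) < 1))] with x hx hx1
    have hb := pow_sch_le hm hx
    have hxp : 0 ≤ x ^ p := by positivity
    have hexp : Real.exp (-x) = Real.exp (-(1/2) * x) * Real.exp (-(1/2) * x) := by
      rw [← Real.exp_add]; ring_nf
    rw [Real.norm_eq_abs, Real.norm_eq_abs, abs_of_nonneg (mul_nonneg (by positivity) (pow_nonneg (sch_pos x).le m)),
      abs_of_nonneg (Real.exp_pos _).le]
    calc x ^ p * sch x ^ m ≤ x ^ p * (2 ^ m * Real.exp (-x)) := by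
          have := (sch_pos x).le; nlinarith [hb, hxp]
      _ = 2 ^ m * ((x ^ p * Real.exp (-(1/2) * x)) * Real.exp (-(1/2) * x)) := by
          rw [hexp]; ring
      _ ≤ 2 ^ m * (1 * Real.exp (-(1/2) * x)) := by
          gcongr
      _ = 2 ^ m * Real.exp (-(1/2) * x) := by ring

lemma hasDerivAt_sch (x : ℝ) :
    HasDerivAt sch (-Real.sinh x * sch x ^ 2) x := by
  have h := (Real.hasDerivAt_cosh x).inv (Real.cosh_pos x).ne'
  refine h.congr_deriv (Eq.symm ?_)
  rw [sch]
  field_simp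

lemma hasDerivAt_sch_pow (m : ℕ) (x : ℝ) :
    HasDerivAt (fun y => sch y ^ m) (-(m:ℝ) * Real.sinh x * sch x ^ (m + 1)) x := by
  have h := (hasDerivAt_sch x).pow m
  refine h.congr_deriv (Eq.symm ?_)
  rcases Nat.eq_zero_or_pos m with hm | hm
  · subst hm; simp
  · have : m - 1 + 2 = m + 1 := by omega
    rw [show (m:ℝ) * sch x ^ (m-1) * (-Real.sinh x * sch x ^ 2)
        = -(m:ℝ) * Real.sinh x * (sch x ^ (m-1) * sch x ^ 2) by ring,
      ← pow_add, this]

lemma sinh_mul_sch_le_one (x : ℝ) : Real.sinh x * sch x ≤ 1 := by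
  rw [sch]
  have h := Real.sinh_lt_cosh x
  have hc := Real.cosh_pos x
  rw [mul_inv_le_iff₀ hc, one_mul]
  exact h.le

lemma tendsto_pow_sinh_sch (p : ℕ) {m : ℕ} (hm : 1 ≤ m) :
    Tendsto (fun x : ℝ => x ^ p * (Real.sinh x * sch x ^ (m + 1))) atTop (𝓝 0) := by
  apply squeeze_zero' (g := fun x : ℝ => x ^ p * sch x ^ m)
  · filter_upwards [eventually_ge_atTop (0:ℝ)] with x hx
    have h1 : 0 ≤ Real.sinh x := Real.sinh_nonneg_iff.2 hx
    have h2 : (0:ℝ) ≤ sch x ^ (m+1) := pow_nonneg (sch_pos x).le _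
    positivity
  · filter_upwards [eventually_ge_atTop (0:ℝ)] with x hx
    have hxp : (0:ℝ) ≤ x ^ p := by positivity
    have key : Real.sinh x * sch x ^ (m + 1) ≤ sch x ^ m := by
      have h1 := sinh_mul_sch_le_one x
      have h2 : (0:ℝ) ≤ sch x ^ m := pow_nonneg (sch_pos x).le _
      calc Real.sinh x * sch x ^ (m + 1) = (Real.sinh x * sch x) * sch x ^ m := by ring
        _ ≤ 1 * sch x ^ m := by
            apply mul_le_mul_of_nonneg_right h1 h2
        _ = sch x ^ m := one_mul _
    exact mul_le_mul_of_nonneg_left key hxp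
  · exact tendsto_pow_mul_sch p hm

lemma tendsto_tanh : Tendsto (fun x : ℝ => Real.sinh x * sch x) atTop (𝓝 1) := by
  have heq : (fun x : ℝ => Real.sinh x * sch x)
      = fun x => 1 - Real.exp (-x) * sch x := by
    funext x
    rw [sch, Real.sinh_eq, Real.cosh_eq]
    have hc : Real.exp x + Real.exp (-x) ≠ 0 := by positivity
    field_simp
    ring
  rw [heq]
  have h0 : Tendsto (fun x : ℝ => Real.exp (-x) * sch x) atTop (𝓝 0) := by
    apply squeeze_zero' (g := fun x : ℝ => 2 * (Real.exp (-x) * Real.exp (-x)))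
    · filter_upwards with x
      exact mul_nonneg (Real.exp_pos _).le (sch_pos x).le
    · filter_upwards with x
      have := sch_le x
      nlinarith [Real.exp_pos (-x), (sch_pos x).le]
    · have he : Tendsto (fun x : ℝ => Real.exp (-x)) atTop (𝓝 0) :=
        Real.tendsto_exp_neg_atTop_nhds_zero
      simpa using (he.mul he).const_mul (2:ℝ)
  simpa using tendsto_const_nhds.sub h0

lemma integral_sch_sq : ∫ x in Ioi (0:ℝ), sch x ^ 2 = 1 := by
  have hderiv : ∀ x ∈ Ici (0:ℝ), HasDerivAt (fun y => Real.sinh y * sch y) (sch x ^ 2) x := by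
    intro x _
    have h := (Real.hasDerivAt_sinh x).mul (hasDerivAt_sch x)
    refine h.congr_deriv (Eq.symm ?_)
    have hc := (Real.cosh_pos x).ne'
    have hid := Real.cosh_sq_sub_sinh_sq x
    rw [sch]
    field_simp
    nlinarith [hid]
  have hint : IntegrableOn (fun x : ℝ => sch x ^ 2) (Ioi 0) := by
    have := integrableOn_pow_mul_sch 0 (m := 2) one_le_two
    simpa using this
  have := integral_Ioi_of_hasDerivAt_of_tendsto' hderiv hint tendsto_tanh
  simpa [Real.sinh_zero] using this

noncomputable def Cint (k : ℕ) : ℝ := ∫ x in Ioi (0:ℝ), sch x ^ (2*k+2)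
noncomputable def Jint (k : ℕ) : ℝ := ∫ x in Ioi (0:ℝ), x ^ 2 * sch x ^ (2*k+2)

lemma Cint_integrable (k : ℕ) : IntegrableOn (fun x : ℝ => sch x ^ (2*k+2)) (Ioi 0) := by
  have := integrableOn_pow_mul_sch 0 (m := 2*k+2) (by omega)
  simpa using this

lemma Jint_integrable (k : ℕ) :
    IntegrableOn (fun x : ℝ => x ^ 2 * sch x ^ (2*k+2)) (Ioi 0) :=
  integrableOn_pow_mul_sch 2 (by omega)

lemma C_rec (n : ℕ) :
    (2*(n:ℝ)+3) * Cint (n+1) = (2*(n:ℝ)+2) * Cint n := by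
  have hderiv : ∀ x ∈ Ici (0:ℝ), HasDerivAt (fun y => Real.sinh y * sch y ^ (2*n+3))
      ((2*(n:ℝ)+3) * sch x ^ (2*n+4) - (2*(n:ℝ)+2) * sch x ^ (2*n+2)) x := by
    intro x _
    have h := (Real.hasDerivAt_sinh x).mul (hasDerivAt_sch_pow (2*n+3) x)
    refine h.congr_deriv (Eq.symm ?_)
    have hc := (Real.cosh_pos x).ne'
    have hid := Real.cosh_sq_sub_sinh_sq x
    have h1 : Real.cosh x * sch x = 1 := by
      rw [sch]; field_simp
    have h2 : Real.sinh x ^ 2 * sch x ^ 2 = 1 - sch x ^ 2 := by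
      rw [sch]
      field_simp
      linarith [hid]
    push_cast
    linear_combination ((2*(n:ℝ)+3) * sch x ^ (2*n+2)) * h2 - (sch x ^ (2*n+2)) * h1
  have htend : Tendsto (fun x : ℝ => Real.sinh x * sch x ^ (2*n+3)) atTop (𝓝 0) := by
    have := tendsto_pow_sinh_sch 0 (m := 2*n+2) (by omega)
    simpa using this
  have i1 : IntegrableOn (fun x : ℝ => sch x ^ (2*n+4)) (Ioi 0) := by
    have := Cint_integrable (n+1)
    rwa [show 2*(n+1)+2 = 2*n+4 from by omega] at this
  have i2 := Cint_integrable n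
  have hint : IntegrableOn (fun x : ℝ =>
      (2*(n:ℝ)+3) * sch x ^ (2*n+4) - (2*(n:ℝ)+2) * sch x ^ (2*n+2)) (Ioi 0) :=
    (i1.const_mul _).sub (i2.const_mul _)
  have key := integral_Ioi_of_hasDerivAt_of_tendsto' hderiv hint htend
  rw [integral_sub (i1.const_mul _) (i2.const_mul _)] at key
  rw [MeasureTheory.integral_const_mul, MeasureTheory.integral_const_mul] at key
  have e1 : (2*(n+1)+2) = 2*n+4 := by omega
  have hC : (∫ x in Ioi (0:ℝ), sch x ^ (2*n+4)) = Cint (n+1) := by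
    rw [Cint, e1]
  have hC2 : (∫ x in Ioi (0:ℝ), sch x ^ (2*n+2)) = Cint n := rfl
  rw [hC, hC2] at key
  simp only [Real.sinh_zero, zero_mul, sub_zero, zero_sub] at key
  linarith [key]

lemma J_rec (n : ℕ) :
    ((n:ℝ)+1)*(2*(n:ℝ)+3) * Jint (n+1) = ((n:ℝ)+1)*(2*(n:ℝ)+2) * Jint n - Cint n := by
  set G : ℝ → ℝ := fun x =>
    ((n:ℝ)+1) * (x^2 * (Real.sinh x * sch x ^ (2*n+3))) + x * sch x ^ (2*n+2) with hG
  have hderiv : ∀ x ∈ Ici (0:ℝ), HasDerivAt G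
      (((n:ℝ)+1)*(2*(n:ℝ)+3) * (x^2 * sch x ^ (2*n+4))
        - ((n:ℝ)+1)*(2*(n:ℝ)+2) * (x^2 * sch x ^ (2*n+2)) + sch x ^ (2*n+2)) x := by
    intro x _
    have d1 : HasDerivAt (fun y : ℝ => y^2 * (Real.sinh y * sch y ^ (2*n+3)))
        (2*x^(2-1) * (Real.sinh x * sch x ^ (2*n+3))
          + x^2 * (Real.cosh x * sch x ^ (2*n+3)
            + Real.sinh x * (-((2*n+3 : ℕ):ℝ) * Real.sinh x * sch x ^ (2*n+3+1)))) x := by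
      exact (hasDerivAt_pow 2 x).mul
        ((Real.hasDerivAt_sinh x).mul (hasDerivAt_sch_pow (2*n+3) x))
    have d2 : HasDerivAt (fun y : ℝ => y * sch y ^ (2*n+2))
        (1 * sch x ^ (2*n+2) + x * (-((2*n+2:ℕ):ℝ) * Real.sinh x * sch x ^ (2*n+2+1))) x :=
      (hasDerivAt_id x).mul (hasDerivAt_sch_pow (2*n+2) x)
    have h := (d1.const_mul (((n:ℝ)+1))).add d2
    refine h.congr_deriv (Eq.symm ?_)
    have hc := (Real.cosh_pos x).ne'
    have hid := Real.cosh_sq_sub_sinh_sq x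
    have h1 : Real.cosh x * sch x = 1 := by
      rw [sch]; field_simp
    have h2 : Real.sinh x ^ 2 * sch x ^ 2 = 1 - sch x ^ 2 := by
      rw [sch]; field_simp; linarith [hid]
    push_cast
    linear_combination (((n:ℝ)+1)*(2*(n:ℝ)+3)*x^2*sch x ^ (2*n+2)) * h2
      - (((n:ℝ)+1)*x^2*sch x ^ (2*n+2)) * h1
  have htend : Tendsto G atTop (𝓝 0) := by
    have t1 := (tendsto_pow_sinh_sch 2 (m := 2*n+2) (by omega)).const_mul (((n:ℝ)+1))
    have t2 := tendsto_pow_mul_sch 1 (m := 2*n+2) (by omega)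
    have h12 := t1.add t2
    simp only [mul_zero, add_zero] at h12
    apply h12.congr
    intro x
    rw [hG]
    simp only [pow_one]
  have i1 : IntegrableOn (fun x : ℝ => x^2 * sch x ^ (2*n+4)) (Ioi 0) := by
    have := Jint_integrable (n+1)
    rwa [show 2*(n+1)+2 = 2*n+4 from by omega] at this
  have i2 := Jint_integrable n
  have i3 := Cint_integrable n
  have hint : IntegrableOn (fun x : ℝ =>
      ((n:ℝ)+1)*(2*(n:ℝ)+3) * (x^2 * sch x ^ (2*n+4))
        - ((n:ℝ)+1)*(2*(n:ℝ)+2) * (x^2 * sch x ^ (2*n+2)) + sch x ^ (2*n+2)) (Ioi 0) :=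
    ((i1.const_mul _).sub (i2.const_mul _)).add i3
  have i12 : IntegrableOn (fun x : ℝ =>
      ((n:ℝ)+1)*(2*(n:ℝ)+3) * (x^2 * sch x ^ (2*n+4))
        - ((n:ℝ)+1)*(2*(n:ℝ)+2) * (x^2 * sch x ^ (2*n+2))) (Ioi 0) :=
    (i1.const_mul _).sub (i2.const_mul _)
  have key := integral_Ioi_of_hasDerivAt_of_tendsto' hderiv hint htend
  rw [integral_add i12 i3,
    integral_sub (i1.const_mul _) (i2.const_mul _),
    MeasureTheory.integral_const_mul, MeasureTheory.integral_const_mul] at key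
  have hJ1 : (∫ x in Ioi (0:ℝ), x^2 * sch x ^ (2*n+4)) = Jint (n+1) := by
    rw [Jint, show 2*(n+1)+2 = 2*n+4 from by omega]
  have hJ2 : (∫ x in Ioi (0:ℝ), x^2 * sch x ^ (2*n+2)) = Jint n := rfl
  have hC : (∫ x in Ioi (0:ℝ), sch x ^ (2*n+2)) = Cint n := rfl
  rw [hJ1, hJ2, hC] at key
  have hG0 : G 0 = 0 := by rw [hG]; simp
  rw [hG0] at key
  linarith [key]

lemma int_sq_exp {r : ℝ} (hr : 0 < r) :
    ∫ x in Ioi (0:ℝ), x ^ 2 * Real.exp (-(r * x)) = 2 / r ^ 3 := by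
  have h := Real.integral_rpow_mul_exp_neg_mul_Ioi (a := 3) (by norm_num) hr
  have hcong : ∫ t in Ioi (0:ℝ), t ^ ((3:ℝ)-1) * Real.exp (-(r * t))
      = ∫ x in Ioi (0:ℝ), x ^ 2 * Real.exp (-(r * x)) := by
    apply setIntegral_congr_fun measurableSet_Ioi
    intro t _
    show t ^ ((3:ℝ)-1) * Real.exp (-(r*t)) = t ^ (2:ℕ) * Real.exp (-(r*t))
    rw [show (3:ℝ)-1 = ((2:ℕ):ℝ) by norm_num, Real.rpow_natCast]
  rw [hcong] at h
  rw [h]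
  have hG : Real.Gamma 3 = 2 := by
    rw [show (3:ℝ) = ((2:ℕ):ℝ)+1 by norm_num, Real.Gamma_nat_eq_factorial]
    norm_num
  rw [hG, show ((3:ℝ)) = ((3:ℕ):ℝ) by norm_num, Real.rpow_natCast]
  field_simp

lemma hasSum_alt : HasSum (fun n : ℕ => (-1)^(n+1) / (n:ℝ)^2) (Real.pi^2/12) := by
  have h := hasSum_zeta_two
  have heven : HasSum (fun m : ℕ => (2:ℝ) / ((2*m:ℕ):ℝ)^2) (Real.pi^2/12) := by
    have h4 := h.mul_left ((1:ℝ)/2)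
    have : (fun m : ℕ => (1:ℝ)/2 * (1/(m:ℝ)^2)) = fun m : ℕ => (2:ℝ)/((2*m:ℕ):ℝ)^2 := by
      funext m
      rcases Nat.eq_zero_or_pos m with hm | hm
      · subst hm; norm_num
      · push_cast
        have : (m:ℝ) ≠ 0 := Nat.cast_ne_zero.2 hm.ne'
        field_simp
    rw [this] at h4
    rw [show Real.pi^2/12 = 1/2*(Real.pi^2/6) by ring]
    exact h4
  have hg : HasSum (fun n : ℕ => if Even n then (2:ℝ)/(n:ℝ)^2 else 0) (Real.pi^2/12) := by
    have hinj : Function.Injective (fun m : ℕ => 2*m) := by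
      intro a b hab
      simp only [] at hab
      omega
    have hvanish : ∀ n ∉ Set.range (fun m : ℕ => 2*m),
        (if Even n then (2:ℝ)/(n:ℝ)^2 else 0) = 0 := by
      intro n hn
      have hne : ¬ Even n := by
        simp only [Set.mem_range] at hn
        intro ⟨r, hr⟩
        exact hn ⟨r, by omega⟩
      simp [hne]
    have hcomp : ((fun n : ℕ => if Even n then (2:ℝ)/(n:ℝ)^2 else 0) ∘ (fun m : ℕ => 2*m))
        = fun m : ℕ => (2:ℝ)/((2*m:ℕ):ℝ)^2 := by
      funext m
      simp [even_two_mul]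
    rw [← Function.Injective.hasSum_iff hinj hvanish]
    rw [hcomp]
    exact heven
  have hsub := h.sub hg
  have : (fun n : ℕ => 1/(n:ℝ)^2 - (if Even n then (2:ℝ)/(n:ℝ)^2 else 0))
      = fun n : ℕ => (-1)^(n+1)/(n:ℝ)^2 := by
    funext n
    by_cases hn : Even n
    · simp only [hn, if_true]
      rw [(Even.add_one hn).neg_one_pow]
      ring
    · simp only [hn, if_false]
      rw [(Odd.add_one (Nat.not_even_iff_odd.1 hn)).neg_one_pow]
      ring
  rw [this] at hsub
  have e : Real.pi^2/6 - Real.pi^2/12 = Real.pi^2/12 := by ring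
  rw [← e]
  exact hsub

noncomputable def fser (n : ℕ) (x : ℝ) : ℝ :=
  (-1:ℝ)^(n+1) * (4*(n:ℝ)) * (x^2 * Real.exp (-(2*(n:ℝ)*x)))

lemma fser_hasSum {x : ℝ} (hx : 0 < x) :
    HasSum (fun n => fser n x) (x^2 * sch x ^ 2) := by
  set r : ℝ := -Real.exp (-(2*x)) with hr
  have hq : ‖r‖ < 1 := by
    rw [hr, norm_neg, Real.norm_eq_abs, abs_of_nonneg (Real.exp_pos _).le]
    exact Real.exp_lt_one_iff.2 (by linarith)
  have hS := (hasSum_coe_mul_geometric_of_norm_lt_one hq).mul_left ((-4)*x^2)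
  have hfun : (fun n : ℕ => (-4)*x^2 * ((n:ℝ) * r^n)) = fun n => fser n x := by
    funext n
    rw [fser, hr]
    have h1 : (-Real.exp (-(2*x)))^n = (-1:ℝ)^n * Real.exp (-(2*(n:ℝ)*x)) := by
      rw [neg_pow, ← Real.exp_nat_mul]
      ring_nf
    rw [h1]
    ring
  rw [hfun] at hS
  rw [show x^2 * sch x ^ 2 = (-4)*x^2 * (r / (1 - r)^2) from ?_]
  · exact hS
  have hE : Real.exp (-x) = (Real.exp x)⁻¹ := Real.exp_neg x
  have hE2 : Real.exp (-(2*x)) = ((Real.exp x)^2)⁻¹ := by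
    rw [show -(2*x) = -(x+x) by ring, Real.exp_neg, Real.exp_add]
    ring
  have hpos : (0:ℝ) < Real.exp x := Real.exp_pos x
  have hden : (1:ℝ) - r ≠ 0 := by
    rw [hr]
    have := Real.exp_pos (-(2*x))
    intro h
    nlinarith
  rw [hr] at hden ⊢
  rw [sch, Real.cosh_eq, hE, hE2]
  have hne : Real.exp x ≠ 0 := hpos.ne'
  have hd1 : Real.exp x ^ 2 + 1 ≠ 0 := by positivity
  have hd2 : 1 + Real.exp x ^ 2 ≠ 0 := by positivity
  have hd3 : Real.exp x + (Real.exp x)⁻¹ ≠ 0 := by positivity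
  have hd4 : Real.exp x ^ 2 - -1 ≠ 0 := by rw [sub_neg_eq_add]; positivity
  field_simp
  ring

lemma fser_eq_zero : fser 0 = fun _ => (0:ℝ) := by
  funext x; rw [fser]; norm_num

lemma fser_integrable (n : ℕ) : IntegrableOn (fser n) (Ioi (0:ℝ)) := by
  rcases Nat.eq_zero_or_pos n with hn | hn
  · subst hn; rw [fser_eq_zero]; exact integrableOn_zero
  · have hr : (0:ℝ) < 2*(n:ℝ) := by positivity
    have hint : IntegrableOn (fun x : ℝ => x^2 * Real.exp (-(2*(n:ℝ)*x))) (Ioi 0) := by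
      apply integrable_of_isBigO_exp_neg (b := 2*(n:ℝ)/2) (by positivity)
      · exact ((continuous_pow 2).mul (Real.continuous_exp.comp (by continuity))).continuousOn
      · have h0 : Tendsto (fun x : ℝ => x^2 * Real.exp (-(2*(n:ℝ))/2 * x)) atTop (𝓝 0) := by
          have := tendsto_rpow_mul_exp_neg_mul_atTop_nhds_zero 2 (2*(n:ℝ)/2) (by positivity)
          apply this.congr'
          filter_upwards [eventually_ge_atTop (0:ℝ)] with x hx
          rw [show ((2:ℝ)) = ((2:ℕ):ℝ) by norm_num, Real.rpow_natCast]
          ring_nf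
        apply Asymptotics.IsBigO.of_bound 1
        filter_upwards [eventually_ge_atTop (0:ℝ),
          h0.eventually (eventually_le_nhds (by norm_num : (0:ℝ) < 1))] with x hx hx1
        rw [Real.norm_eq_abs, Real.norm_eq_abs, abs_of_nonneg (by positivity),
          abs_of_nonneg (Real.exp_pos _).le, one_mul]
        have : Real.exp (-(2*(n:ℝ)*x)) = Real.exp (-(2*(n:ℝ))/2*x) * Real.exp (-(2*(n:ℝ))/2*x) := by
          rw [← Real.exp_add]; ring_nf
        calc x^2 * Real.exp (-(2*(n:ℝ)*x))
            = (x^2 * Real.exp (-(2*(n:ℝ))/2*x)) * Real.exp (-(2*(n:ℝ))/2*x) := by rw [this]; ring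
          _ ≤ 1 * Real.exp (-(2*(n:ℝ))/2*x) := by
              gcongr
          _ = Real.exp (-(2*(n:ℝ)/2)*x) := by rw [one_mul]; ring_nf
    exact hint.const_mul _

lemma fser_integral {n : ℕ} (hn : 1 ≤ n) :
    ∫ x in Ioi (0:ℝ), fser n x = (-1:ℝ)^(n+1) / (n:ℝ)^2 := by
  have hr : (0:ℝ) < 2*(n:ℝ) := by
    have : (1:ℝ) ≤ (n:ℝ) := by exact_mod_cast hn
    linarith
  have h := int_sq_exp hr
  simp only [fser]
  rw [MeasureTheory.integral_const_mul, h]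
  have hn0 : (n:ℝ) ≠ 0 := Nat.cast_ne_zero.2 (by omega)
  field_simp
  ring

lemma fser_norm_integral (n : ℕ) :
    ∫ x in Ioi (0:ℝ), ‖fser n x‖ = 4*(n:ℝ) * ∫ x in Ioi (0:ℝ), x^2 * Real.exp (-(2*(n:ℝ)*x)) := by
  rw [← MeasureTheory.integral_const_mul]
  apply setIntegral_congr_fun measurableSet_Ioi
  intro x hx
  have hx0 : (0:ℝ) ≤ x := (le_of_lt hx)
  show ‖fser n x‖ = 4*(n:ℝ) * (x^2 * Real.exp (-(2*(n:ℝ)*x)))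
  rw [fser, Real.norm_eq_abs, abs_mul, abs_mul, abs_pow, abs_neg, abs_one, one_pow, one_mul,
    abs_of_nonneg (by positivity : (0:ℝ) ≤ 4*(n:ℝ)),
    abs_of_nonneg (by positivity : (0:ℝ) ≤ x^2 * Real.exp (-(2*(n:ℝ)*x)))]

lemma Jint_zero : Jint 0 = Real.pi^2/12 := by
  have hF_int : ∀ n : ℕ, Integrable (fser n) (volume.restrict (Ioi (0:ℝ))) := fser_integrable
  have hnorm : ∀ n : ℕ, (∫ x in Ioi (0:ℝ), ‖fser n x‖) = 1/(n:ℝ)^2 := by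
    intro n
    rcases Nat.eq_zero_or_pos n with hn | hn
    · subst hn
      rw [fser_norm_integral]
      norm_num
    · rw [fser_norm_integral, int_sq_exp (by positivity : (0:ℝ) < 2*(n:ℝ))]
      have hn0 : (n:ℝ) ≠ 0 := Nat.cast_ne_zero.2 (by omega)
      field_simp
      ring
  have hF_sum : Summable (fun n : ℕ => ∫ x in Ioi (0:ℝ), ‖fser n x‖) := by
    apply Summable.congr (f := fun n : ℕ => 1/(n:ℝ)^2)
    · exact Real.summable_one_div_nat_pow.2 (by norm_num)
    · intro n; exact (hnorm n).symm
  have hHS := MeasureTheory.hasSum_integral_of_summable_integral_norm hF_int hF_sum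
  have hvals : (fun n : ℕ => ∫ x in Ioi (0:ℝ), fser n x)
      = fun n : ℕ => (-1:ℝ)^(n+1)/(n:ℝ)^2 := by
    funext n
    rcases Nat.eq_zero_or_pos n with hn | hn
    · subst hn
      rw [fser_eq_zero]
      norm_num
    · exact fser_integral hn
  rw [hvals] at hHS
  have hEq : Jint 0 = ∫ x in Ioi (0:ℝ), ∑' n, fser n x := by
    rw [Jint]
    apply setIntegral_congr_fun measurableSet_Ioi
    intro x hx
    exact ((fser_hasSum hx).tsum_eq).symm
  rw [hEq]
  exact (hHS.unique hasSum_alt).symm ▸ rfl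

lemma Cval : ∀ k : ℕ, Cint k = 4^k * ((k.factorial:ℝ))^2 / (((2*k+1).factorial:ℝ)) := by
  intro k
  induction k with
  | zero =>
      have : Cint 0 = ∫ x in Ioi (0:ℝ), sch x ^ 2 := by rw [Cint]
      rw [this, integral_sch_sq]
      norm_num
  | succ n ih =>
      have hrec := C_rec n
      have h23 : (((2*(n+1)+1).factorial:ℕ):ℝ)
          = (2*(n:ℝ)+3)*((2*(n:ℝ)+2)*(((2*n+1).factorial:ℕ):ℝ)) := by
        rw [show 2*(n+1)+1 = ((2*n+1)+1)+1 from by ring]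
        rw [Nat.factorial_succ, Nat.factorial_succ]
        push_cast
        ring
      have hfac : (((2*n+1).factorial:ℕ):ℝ) ≠ 0 :=
        Nat.cast_ne_zero.2 (Nat.factorial_ne_zero _)
      have h3 : (2*(n:ℝ)+3) ≠ 0 := by positivity
      rw [ih] at hrec
      have : Cint (n+1) = (2*(n:ℝ)+2) * (4^n * ((n.factorial:ℝ))^2 / (((2*n+1).factorial:ℝ))) / (2*(n:ℝ)+3) := by
        field_simp at hrec ⊢
        linarith [hrec]
      have hfs : (((n+1).factorial:ℕ):ℝ) = ((n:ℝ)+1) * ((n.factorial:ℕ):ℝ) := by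
        rw [Nat.factorial_succ]; push_cast; ring
      rw [this, h23, hfs]
      push_cast
      field_simp
      ring

noncomputable def Aco (k : ℕ) : ℝ :=
  4^k * ((k.factorial:ℝ))^2 / (2*(((2*k+1).factorial:ℝ)))

lemma Jval : ∀ k : ℕ,
    Jint k = Aco k * (Real.pi^2/6 - ∑ j ∈ Finset.Icc 1 k, (1:ℝ)/(j:ℝ)^2) := by
  intro k
  induction k with
  | zero =>
      rw [Jint_zero, Aco]
      norm_num
      ring
  | succ n ih =>
      have hrec := J_rec n
      have hC := Cval n
      have hsum : ∑ j ∈ Finset.Icc 1 (n+1), (1:ℝ)/(j:ℝ)^2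
          = (∑ j ∈ Finset.Icc 1 n, (1:ℝ)/(j:ℝ)^2) + 1/((n:ℝ)+1)^2 := by
        rw [Finset.sum_Icc_succ_top (by omega : 1 ≤ n+1)]
        push_cast
        ring
      have h23 : (((2*(n+1)+1).factorial:ℕ):ℝ)
          = (2*(n:ℝ)+3)*((2*(n:ℝ)+2)*(((2*n+1).factorial:ℕ):ℝ)) := by
        rw [show 2*(n+1)+1 = ((2*n+1)+1)+1 from by ring]
        rw [Nat.factorial_succ, Nat.factorial_succ]
        push_cast
        ring
      have hfac : (((2*n+1).factorial:ℕ):ℝ) ≠ 0 :=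
        Nat.cast_ne_zero.2 (Nat.factorial_ne_zero _)
      have h3 : (2*(n:ℝ)+3) ≠ 0 := by positivity
      have hn1 : ((n:ℝ)+1) ≠ 0 := by positivity
      rw [ih, hC] at hrec
      have hsolve : Jint (n+1) =
          (((n:ℝ)+1)*(2*(n:ℝ)+2) * (Aco n * (Real.pi^2/6 - ∑ j ∈ Finset.Icc 1 n, (1:ℝ)/(j:ℝ)^2))
            - 4^n * ((n.factorial:ℝ))^2 / (((2*n+1).factorial:ℝ)))
          / (((n:ℝ)+1)*(2*(n:ℝ)+3)) := by
        rw [eq_div_iff (by positivity)]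
        linarith [hrec]
      have hfs : (((n+1).factorial:ℕ):ℝ) = ((n:ℝ)+1) * ((n.factorial:ℕ):ℝ) := by
        rw [Nat.factorial_succ]; push_cast; ring
      rw [hsolve, hsum, Aco, Aco, h23, hfs]
      push_cast
      field_simp
      ring

theorem sech_moment_closed_form :
    (∀ k : ℕ,
      (∫ x in Set.Ioi (0:ℝ), x ^ 2 * (1 / Real.cosh x) ^ (2 * k + 2))
        = ((2:ℝ) ^ ((2 * (k:ℤ)) - 1) * (k.factorial : ℝ) ^ 2 / ((2 * k + 1).factorial : ℝ))
          * (Real.pi ^ 2 / 6 - ∑ j ∈ Finset.Icc 1 k, (1:ℝ) / (j:ℝ) ^ 2)) ∧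
    (∫ x in Set.Ioi (0:ℝ), x ^ 2 * (1 / Real.cosh x) ^ 2) = Real.pi ^ 2 / 12 := by
  have hint : ∀ k : ℕ, (∫ x in Set.Ioi (0:ℝ), x ^ 2 * (1 / Real.cosh x) ^ (2 * k + 2)) = Jint k := by
    intro k
    rw [Jint]
    apply setIntegral_congr_fun measurableSet_Ioi
    intro x _
    show x ^ 2 * (1 / Real.cosh x) ^ (2*k+2) = x ^ 2 * sch x ^ (2*k+2)
    rw [one_div]
    rfl
  constructor
  · intro k
    rw [hint k, Jval k, Aco]
    congr 1
    have hz : (2:ℝ) ^ ((2 * (k:ℤ)) - 1) = (2:ℝ)^(2*k) / 2 := by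
      rw [zpow_sub₀ (two_ne_zero), zpow_one]
      norm_num
      rw [show ((2:ℤ)*(k:ℤ)) = ((2*k : ℕ):ℤ) by push_cast; ring, zpow_natCast]
    rw [hz, pow_mul]
    have hfac : (((2*k+1).factorial:ℕ):ℝ) ≠ 0 :=
      Nat.cast_ne_zero.2 (Nat.factorial_ne_zero _)
    field_simp
    ring
  · have h := hint 0
    rw [Jint_zero] at h
    exact h
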